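/- Let d ∈ ℕ, d ≥ 1, let γ > 0 be real, let α > 9/2 be real, and let v̂ : ℤ^d → ℂ satisfy ‖v̂‖_α < ∞. Then there exists a constant c₂ > 0, depending only on d, α, γ and v̂ (in particular independent of the modulus, the generating vector, the anti-aliasing family and the vector y), such that for every modulus n ≥ 1, every generating vector z ∈ ℤ^d, every minimal anti-aliasing family h_0,…,h_{n−1} for (z, n), and every y ∈ ℂ^n: ‖(D(DW − WD) − (DW − WD)D) y‖₂ ≤ c₂ · ‖(D + I)² y‖₂, where D, W ∈ ℂ^{n×n} are the matrices defined in the context and I is the identity matrix. -/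

import Mathlib

set_option maxHeartbeats 1000000

noncomputable section

/-- Integer dot product on `ℤ^d`. -/
def dotZ {d : ℕ} (h z : Fin d → ℤ) : ℤ := ∑ i, h i * z i

/-- The squared Korobov weight `r_α(h)² = ∏_j max(|h_j|^(2α), 1)`. -/
def korWeightSq {d : ℕ} (α : ℝ) (h : Fin d → ℤ) : ℝ :=
  ∏ j, max (|(h j : ℝ)| ^ (2 * α)) 1

/-- The squared Euclidean norm `‖h‖₂² = Σ_j h_j²` of `h ∈ ℤ^d`. -/
def normSq {d : ℕ} (h : Fin d → ℤ) : ℝ := ∑ j, (h j : ℝ) ^ 2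

/-- The Euclidean norm of a complex vector. -/
def vecNorm {ι : Type*} [Fintype ι] (y : ι → ℂ) : ℝ := Real.sqrt (∑ ξ, ‖y ξ‖ ^ 2)

/-- The diagonal matrix `D` with entries `2π²γ‖h_ξ‖₂²`. -/
def Dmat {d : ℕ} (γ : ℝ) (n : ℕ) (hfam : Fin n → Fin d → ℤ) :
    Matrix (Fin n) (Fin n) ℂ :=
  Matrix.diagonal fun ξ => ((2 * Real.pi ^ 2 * γ * normSq (hfam ξ) : ℝ) : ℂ)

/-- The multiplication matrix `W` with entries
`W_{ξ,ξ'} = (1/γ) Σ_{h·z ≡ ξ−ξ' (mod n)} v̂(h)`. -/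
def Wmat {d : ℕ} (γ : ℝ) (vhat : (Fin d → ℤ) → ℂ) (n : ℕ) (z : Fin d → ℤ) :
    Matrix (Fin n) (Fin n) ℂ :=
  Matrix.of fun ξ ξ' => (1 / (γ : ℂ)) *
    ∑' h : {h : Fin d → ℤ //
        ((dotZ h z : ZMod n)) = ((ξ : ℕ) : ZMod n) - ((ξ' : ℕ) : ZMod n)},
      vhat h.1

namespace Rank1Aux

lemma normSq_nonneg {d : ℕ} (h : Fin d → ℤ) : 0 ≤ normSq h :=
  Finset.sum_nonneg fun _ _ => sq_nonneg _

lemma one_le_korWeightSq {d : ℕ} (α : ℝ) (h : Fin d → ℤ) : 1 ≤ korWeightSq α h := by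
  unfold korWeightSq
  calc (1:ℝ) = ∏ _j : Fin d, 1 := by simp
    _ ≤ _ := Finset.prod_le_prod (by intros; norm_num) (fun j _ => le_max_right _ _)

lemma korWeightSq_pos {d : ℕ} (α : ℝ) (h : Fin d → ℤ) : 0 < korWeightSq α h :=
  lt_of_lt_of_le one_pos (one_le_korWeightSq α h)

lemma dotZ_add {d : ℕ} (a b z : Fin d → ℤ) : dotZ (a + b) z = dotZ a z + dotZ b z := by
  simp [dotZ, add_mul, Finset.sum_add_distrib]

lemma dotZ_sub {d : ℕ} (a b z : Fin d → ℤ) : dotZ (a - b) z = dotZ a z - dotZ b z := by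
  simp [dotZ, sub_mul, Finset.sum_sub_distrib]

/-- Summability of products over `ℤ^d`. -/
lemma summable_pi_prod {ψ : ℤ → ℝ} (hψ0 : ∀ k, 0 ≤ ψ k) (hψ : Summable ψ) :
    ∀ d : ℕ, Summable fun h : Fin d → ℤ => ∏ j, ψ (h j) := by
  intro d
  induction d with
  | zero =>
      exact summable_of_finite_support (Set.toFinite _)
  | succ d ih =>
      have hmul : Summable fun p : ℤ × (Fin d → ℤ) => ψ p.1 * ∏ j, ψ (p.2 j) := by
        exact Summable.mul_of_nonneg (f := ψ) (g := fun h : Fin d → ℤ => ∏ j, ψ (h j)) hψ ih hψ0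
          (fun h => Finset.prod_nonneg fun j _ => hψ0 _)
      have := hmul.comp_injective (Fin.consEquiv (fun _ : Fin (d + 1) => ℤ)).symm.injective
      refine this.congr fun h => ?_
      rw [Fin.prod_univ_succ]
      simp [Function.comp, Fin.consEquiv, Fin.tail]

/-- One-dimensional summability of `max |k| 1 ^ (-b)` for `b > 1`. -/
lemma summable_max_rpow {b : ℝ} (hb : 1 < b) :
    Summable fun k : ℤ => max |(k : ℝ)| 1 ^ (-b) := by
  have h1 : Summable fun k : ℤ => |(k : ℝ)| ^ (-b) := Real.summable_abs_int_rpow hb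
  have h2 : Summable fun k : ℤ => if k = 0 then (1 : ℝ) else 0 :=
    summable_of_finite_support (Set.Finite.subset (Set.finite_singleton 0)
      (fun k hk => by by_contra hne; simp [Function.mem_support] at hk; simp at hne; simp [hne] at hk))
  refine (h1.add h2).congr fun k => ?_
  by_cases hk : k = 0
  · subst hk
    simp [Real.zero_rpow (by linarith : -b ≠ 0)]
  · have : (1 : ℝ) ≤ |(k : ℝ)| := by
      rw [← Int.cast_abs]
      exact_mod_cast Int.one_le_abs (by omega)
    simp [hk, max_eq_left this]


lemma max_rpow_eq {x β : ℝ} (hx : 0 ≤ x) (hβ : 0 ≤ β) :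
    max (x ^ β) 1 = (max x 1) ^ β := by
  rcases le_or_gt 1 x with h | h
  · rw [max_eq_left h, max_eq_left]
    calc (1:ℝ) = 1 ^ β := (Real.one_rpow β).symm
      _ ≤ x ^ β := Real.rpow_le_rpow zero_le_one h hβ
  · rw [max_eq_right h.le, Real.one_rpow, max_eq_right]
    exact Real.rpow_le_one hx h.le hβ

lemma korWeightSq_eq {d : ℕ} {α : ℝ} (hα : 0 ≤ α) (h : Fin d → ℤ) :
    korWeightSq α h = ∏ j, (max |(h j : ℝ)| 1) ^ (2 * α) := by
  unfold korWeightSq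
  exact Finset.prod_congr rfl fun j _ => max_rpow_eq (abs_nonneg _) (by linarith)

lemma one_le_prodmax {d : ℕ} (h : Fin d → ℤ) (s : Finset (Fin d)) :
    (1:ℝ) ≤ ∏ j ∈ s, (max |(h j : ℝ)| 1)^2 := by
  calc (1:ℝ) = ∏ _j ∈ s, 1 := by simp
    _ ≤ _ := Finset.prod_le_prod (by intros; norm_num)
        (fun j _ => one_le_pow₀ (le_max_right _ _))

lemma one_add_normSq_le {d : ℕ} (h : Fin d → ℤ) :
    1 + normSq h ≤ (1 + d) * ∏ j, (max |(h j : ℝ)| 1)^2 := by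
  have hQ := one_le_prodmax h Finset.univ
  have hterm : ∀ j : Fin d, ((h j : ℝ))^2 ≤ ∏ i, (max |(h i : ℝ)| 1)^2 := by
    intro j
    have herase := Finset.mul_prod_erase Finset.univ
      (fun i : Fin d => (max |(h i:ℝ)| 1)^2) (Finset.mem_univ j)
    calc ((h j : ℝ))^2 = |(h j : ℝ)|^2 := (sq_abs _).symm
      _ ≤ (max |(h j : ℝ)| 1)^2 := by
          apply pow_le_pow_left₀ (abs_nonneg _) (le_max_left _ _)
      _ = (max |(h j : ℝ)| 1)^2 * 1 := (mul_one _).symm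
      _ ≤ (max |(h j : ℝ)| 1)^2 * ∏ i ∈ Finset.univ.erase j, (max |(h i : ℝ)| 1)^2 :=
          mul_le_mul_of_nonneg_left (one_le_prodmax h _) (sq_nonneg _)
      _ = _ := herase
  have hN : normSq h ≤ d * ∏ j, (max |(h j : ℝ)| 1)^2 := by
    unfold normSq
    calc ∑ j, ((h j:ℝ))^2 ≤ ∑ _j : Fin d, ∏ i, (max |(h i : ℝ)| 1)^2 :=
          Finset.sum_le_sum fun j _ => hterm j
      _ = d * ∏ i, (max |(h i : ℝ)| 1)^2 := by simp [mul_comm]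
  nlinarith

lemma pow_div_kor_le {d : ℕ} {α : ℝ} (hα : 0 < α) (h : Fin d → ℤ) :
    (1 + normSq h) ^ 4 / korWeightSq α h
      ≤ (1 + (d:ℝ)) ^ 4 * ∏ j, (max |(h j : ℝ)| 1) ^ (8 - 2*α) := by
  have hm : ∀ j : Fin d, (0:ℝ) < max |(h j : ℝ)| 1 :=
    fun j => lt_of_lt_of_le one_pos (le_max_right _ _)
  have hsplit : ∀ j : Fin d, (max |(h j : ℝ)| 1) ^ (8 - 2*α)
      = ((max |(h j : ℝ)| 1)^2)^4 / (max |(h j : ℝ)| 1) ^ (2*α) := by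
    intro j
    rw [show ((max |(h j:ℝ)| 1)^2)^4 = (max |(h j:ℝ)| 1)^((8:ℕ):ℝ) from by
        rw [Real.rpow_natCast, ← pow_mul],
      ← Real.rpow_sub (hm j)]
    norm_num
  rw [korWeightSq_eq hα.le, Finset.prod_congr rfl (fun j _ => hsplit j),
    Finset.prod_div_distrib, Finset.prod_pow]
  rw [← mul_div_assoc]
  have hden : (0:ℝ) < ∏ j, (max |(h j : ℝ)| 1) ^ (2*α) :=
    Finset.prod_pos fun j _ => Real.rpow_pos_of_pos (hm j) _
  have hnum : (1 + normSq h)^4 ≤ (1 + (d:ℝ))^4 * (∏ j, (max |(h j : ℝ)| 1)^2)^4 := by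
    calc (1 + normSq h)^4 ≤ ((1 + (d:ℝ)) * ∏ j, (max |(h j : ℝ)| 1)^2)^4 :=
          pow_le_pow_left₀ (by nlinarith [normSq_nonneg h]) (one_add_normSq_le h) 4
      _ = _ := mul_pow _ _ 4
  gcongr

lemma summable_pow_div_kor {d : ℕ} {α : ℝ} (hα : 9/2 < α) :
    Summable fun h : Fin d → ℤ => (1 + normSq h) ^ 4 / korWeightSq α h := by
  have hb : (1:ℝ) < 2*α - 8 := by linarith
  have hψ : Summable fun k : ℤ => max |(k : ℝ)| 1 ^ (8 - 2*α) := by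
    have := summable_max_rpow hb
    refine this.congr fun k => ?_
    norm_num
  have hprod := summable_pi_prod (fun k => Real.rpow_nonneg
      (le_of_lt (lt_of_lt_of_le one_pos (le_max_right _ _))) _) hψ d
  refine Summable.of_nonneg_of_le (fun h => div_nonneg
      (pow_nonneg (by nlinarith [normSq_nonneg h] : (0:ℝ) ≤ 1 + normSq h) 4)
      (korWeightSq_pos α h).le)
    (fun h => pow_div_kor_le (by linarith) h) (hprod.mul_left ((1 + (d:ℝ))^4))

/-- Summability of `φ h = (1 + ‖h‖²)² ‖v̂ h‖`. -/
lemma summable_phi {d : ℕ} {α : ℝ} (hα : 9/2 < α) (vhat : (Fin d → ℤ) → ℂ)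
    (hv : Summable fun h : Fin d → ℤ => ‖vhat h‖ ^ 2 * korWeightSq α h) :
    Summable fun h : Fin d → ℤ => (1 + normSq h)^2 * ‖vhat h‖ := by
  have hsum : Summable fun h : Fin d → ℤ =>
      (‖vhat h‖ ^ 2 * korWeightSq α h + (1 + normSq h) ^ 4 / korWeightSq α h) / 2 :=
    (hv.add (summable_pow_div_kor hα)).div_const 2
  refine Summable.of_nonneg_of_le (fun h => by positivity) (fun h => ?_) hsum
  have hk := korWeightSq_pos α h
  set k := korWeightSq α h
  set t := 1 + normSq h with ht
  set x := ‖vhat h‖ with hx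
  have h4 : t^4 = (t^2)^2 := by ring
  have key : x^2 * k + t^4 / k - 2*(t^2*x) = (x*k - t^2)^2 / k := by
    field_simp
    ring
  have : 0 ≤ x^2 * k + t^4/k - 2*(t^2*x) := by rw [key]; positivity
  linarith


lemma normSq_add {d : ℕ} (a b : Fin d → ℤ) :
    normSq (a + b) = normSq a + 2 * (∑ j, (a j : ℝ) * (b j : ℝ)) + normSq b := by
  unfold normSq
  rw [Finset.mul_sum, ← Finset.sum_add_distrib, ← Finset.sum_add_distrib]
  refine Finset.sum_congr rfl fun j _ => ?_
  push_cast [Pi.add_apply]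
  ring

lemma normSq_sub {d : ℕ} (a b : Fin d → ℤ) :
    normSq (a - b) = normSq a - 2 * (∑ j, (a j : ℝ) * (b j : ℝ)) + normSq b := by
  unfold normSq
  rw [Finset.mul_sum, ← Finset.sum_sub_distrib, ← Finset.sum_add_distrib]
  refine Finset.sum_congr rfl fun j _ => ?_
  push_cast [Pi.sub_apply]
  ring

/-- Key polynomial inequality. -/
lemma key_poly {A B C p q : ℝ} (hA : 0 ≤ A) (hB : 0 ≤ B) (hC : 0 ≤ C)
    (h1 : C ≤ A + B + 2 * p) (h2 : B ≤ C + A - 2 * q)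
    (hp : p ^ 2 ≤ A * B) (hq : q ^ 2 ≤ A * C) :
    (C - B) ^ 2 ≤ 16 * (1 + A) ^ 2 * (1 + B) ^ 2 := by
  have hp' : 2 * p ≤ A + B := by nlinarith [sq_nonneg (A - B)]
  have hq' : -(2 * q) ≤ A + C := by nlinarith [sq_nonneg (A - C)]
  have h3 : C - B ≤ 4 * (1 + A) * (1 + B) := by nlinarith
  have h4 : -(4 * (1 + A) * (1 + B)) ≤ C - B := by nlinarith
  calc (C - B)^2 ≤ (4 * (1 + A) * (1 + B))^2 := sq_le_sq' h4 h3
    _ = 16 * (1 + A)^2 * (1 + B)^2 := by ring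

/-- Schur-type bound for matrices dominated entrywise by a weighted kernel. -/
lemma schur_bound {n : ℕ} (M : Matrix (Fin n) (Fin n) ℂ) (b : Fin n → Fin n → ℝ)
    (w : Fin n → ℝ) (G : ℝ) (hG : 0 ≤ G)
    (hb : ∀ ξ ξ', 0 ≤ b ξ ξ') (hw : ∀ ξ, 0 ≤ w ξ)
    (hM : ∀ ξ ξ', ‖M ξ ξ'‖ ≤ b ξ ξ' * w ξ')
    (hrow : ∀ ξ, ∑ ξ', b ξ ξ' ≤ G)
    (hcol : ∀ ξ', ∑ ξ, b ξ ξ' ≤ G) (y : Fin n → ℂ) :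
    vecNorm (M.mulVec y) ≤ G * vecNorm (fun ξ => (w ξ : ℂ) * y ξ) := by
  set S := ∑ ξ', (w ξ' * ‖y ξ'‖)^2 with hS
  have hS0 : (0:ℝ) ≤ S := Finset.sum_nonneg fun _ _ => sq_nonneg _
  have step1 : ∀ ξ, ‖(M.mulVec y) ξ‖ ≤ ∑ ξ', b ξ ξ' * (w ξ' * ‖y ξ'‖) := by
    intro ξ
    calc ‖(M.mulVec y) ξ‖ = ‖∑ ξ', M ξ ξ' * y ξ'‖ := by
          simp [Matrix.mulVec, dotProduct]
      _ ≤ ∑ ξ', ‖M ξ ξ' * y ξ'‖ := norm_sum_le _ _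
      _ ≤ ∑ ξ', b ξ ξ' * (w ξ' * ‖y ξ'‖) := Finset.sum_le_sum fun ξ' _ => by
          rw [norm_mul]
          calc ‖M ξ ξ'‖ * ‖y ξ'‖ ≤ (b ξ ξ' * w ξ') * ‖y ξ'‖ :=
                mul_le_mul_of_nonneg_right (hM ξ ξ') (norm_nonneg _)
            _ = _ := by ring
  have step2 : ∀ ξ, ‖(M.mulVec y) ξ‖^2 ≤ G * ∑ ξ', b ξ ξ' * (w ξ' * ‖y ξ'‖)^2 := by
    intro ξ
    have cs := Finset.sum_mul_sq_le_sq_mul_sq Finset.univ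
      (fun ξ' => Real.sqrt (b ξ ξ')) (fun ξ' => Real.sqrt (b ξ ξ') * (w ξ' * ‖y ξ'‖))
    have e1 : ∀ ξ' : Fin n, Real.sqrt (b ξ ξ') * (Real.sqrt (b ξ ξ') * (w ξ' * ‖y ξ'‖))
        = b ξ ξ' * (w ξ' * ‖y ξ'‖) := fun ξ' => by
      rw [← mul_assoc, Real.mul_self_sqrt (hb ξ ξ')]
    have e2 : ∀ ξ' : Fin n, (Real.sqrt (b ξ ξ'))^2 = b ξ ξ' := fun ξ' =>
      Real.sq_sqrt (hb ξ ξ')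
    have e3 : ∀ ξ' : Fin n, (Real.sqrt (b ξ ξ') * (w ξ' * ‖y ξ'‖))^2
        = b ξ ξ' * (w ξ' * ‖y ξ'‖)^2 := fun ξ' => by rw [mul_pow, e2]
    calc ‖(M.mulVec y) ξ‖^2 ≤ (∑ ξ', b ξ ξ' * (w ξ' * ‖y ξ'‖))^2 :=
          pow_le_pow_left₀ (norm_nonneg _) (step1 ξ) 2
      _ = (∑ ξ', Real.sqrt (b ξ ξ') * (Real.sqrt (b ξ ξ') * (w ξ' * ‖y ξ'‖)))^2 := by
          rw [Finset.sum_congr rfl fun ξ' _ => e1 ξ']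
      _ ≤ (∑ ξ', (Real.sqrt (b ξ ξ'))^2)
            * ∑ ξ', (Real.sqrt (b ξ ξ') * (w ξ' * ‖y ξ'‖))^2 := cs
      _ = (∑ ξ', b ξ ξ') * ∑ ξ', b ξ ξ' * (w ξ' * ‖y ξ'‖)^2 := by
          rw [Finset.sum_congr rfl fun ξ' _ => e2 ξ', Finset.sum_congr rfl fun ξ' _ => e3 ξ']
      _ ≤ G * ∑ ξ', b ξ ξ' * (w ξ' * ‖y ξ'‖)^2 :=
          mul_le_mul_of_nonneg_right (hrow ξ)
            (Finset.sum_nonneg fun ξ' _ => mul_nonneg (hb ξ ξ') (sq_nonneg _))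
  have step3 : ∑ ξ, ‖(M.mulVec y) ξ‖^2 ≤ G^2 * S := by
    calc ∑ ξ, ‖(M.mulVec y) ξ‖^2
        ≤ ∑ ξ, G * ∑ ξ', b ξ ξ' * (w ξ' * ‖y ξ'‖)^2 :=
          Finset.sum_le_sum fun ξ _ => step2 ξ
      _ = G * ∑ ξ', (∑ ξ, b ξ ξ') * (w ξ' * ‖y ξ'‖)^2 := by
          rw [← Finset.mul_sum, Finset.sum_comm]
          congr 1
          exact Finset.sum_congr rfl fun ξ' _ => (Finset.sum_mul _ _ _).symm
      _ ≤ G * ∑ ξ', G * (w ξ' * ‖y ξ'‖)^2 := by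
          apply mul_le_mul_of_nonneg_left ?_ hG
          exact Finset.sum_le_sum fun ξ' _ =>
            mul_le_mul_of_nonneg_right (hcol ξ') (sq_nonneg _)
      _ = G^2 * S := by rw [← Finset.mul_sum]; ring
  have hfin : vecNorm (M.mulVec y) ≤ Real.sqrt (G^2 * S) := Real.sqrt_le_sqrt step3
  rw [Real.sqrt_mul (sq_nonneg G), Real.sqrt_sq hG] at hfin
  have hveq : vecNorm (fun ξ => (w ξ : ℂ) * y ξ) = Real.sqrt S := by
    unfold vecNorm
    congr 1
    refine Finset.sum_congr rfl fun ξ _ => ?_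
    rw [norm_mul, Complex.norm_real, Real.norm_of_nonneg (hw ξ), mul_pow]
  rw [hveq]
  exact hfin

end Rank1Aux

/-- **Rank-1 lattice second commutator bound.** For `α > 9/2` and `‖v̂‖_α < ∞`,
there is `c₂ > 0`, independent of the modulus `n`, the generating vector `z`,
the minimal anti-aliasing family and `y`, such that
`‖[D,[D,W]] y‖₂ ≤ c₂ ‖(D + I)² y‖₂`. -/
theorem rank1_second_commutator_bound
    (d : ℕ) (hd : 1 ≤ d) (γ : ℝ) (hγ : 0 < γ) (α : ℝ) (hα : 9 / 2 < α)
    (vhat : (Fin d → ℤ) → ℂ)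
    (hv : Summable fun h : Fin d → ℤ => ‖vhat h‖ ^ 2 * korWeightSq α h) :
    ∃ c₂ : ℝ, 0 < c₂ ∧
      ∀ (n : ℕ), 1 ≤ n → ∀ (z : Fin d → ℤ) (hfam : Fin n → Fin d → ℤ),
        (∀ ξ : Fin n, ((dotZ (hfam ξ) z : ZMod n)) = ((ξ : ℕ) : ZMod n)) →
        (∀ (ξ : Fin n) (h : Fin d → ℤ),
            ((dotZ h z : ZMod n)) = ((ξ : ℕ) : ZMod n) → normSq (hfam ξ) ≤ normSq h) →
        ∀ y : Fin n → ℂ,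
          vecNorm ((Dmat γ n hfam * (Dmat γ n hfam * Wmat γ vhat n z
                - Wmat γ vhat n z * Dmat γ n hfam)
              - (Dmat γ n hfam * Wmat γ vhat n z
                - Wmat γ vhat n z * Dmat γ n hfam) * Dmat γ n hfam).mulVec y)
            ≤ c₂ * vecNorm (((Dmat γ n hfam + 1) ^ 2).mulVec y) := by
  classical
  open Rank1Aux in
  set φ : (Fin d → ℤ) → ℝ := fun h => (1 + normSq h)^2 * ‖vhat h‖ with hφdef
  have hφ0 : ∀ h, 0 ≤ φ h := fun h => mul_nonneg (sq_nonneg _) (norm_nonneg _)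
  have hΦ : Summable φ := Rank1Aux.summable_phi hα vhat hv
  have hπ : (0:ℝ) < Real.pi := Real.pi_pos
  set m : ℝ := min (2 * Real.pi^2 * γ) 1 with hmdef
  have hm0 : 0 < m := lt_min (by positivity) one_pos
  set cW : ℝ := 16 * (2 * Real.pi^2 * γ)^2 / (γ * m^2) with hcWdef
  have hcW0 : 0 < cW := by positivity
  set G : ℝ := ∑' h, φ h with hGdef
  have hG0 : 0 ≤ G := tsum_nonneg hφ0
  refine ⟨cW * G + 1, by positivity, ?_⟩
  intro n hn z hfam hdot hmin y
  haveI : NeZero n := ⟨by omega⟩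
  set g : (Fin d → ℤ) → ZMod n := fun h => ((dotZ h z : ℤ) : ZMod n) with hgdef
  set q : ZMod n → ℝ := fun μ => ∑' h : {h : Fin d → ℤ // g h = μ}, φ h.1 with hqdef
  have hq0 : ∀ μ, 0 ≤ q μ := fun μ => tsum_nonneg fun h => hφ0 h.1
  -- total mass of the fibers
  have hq_total : ∑ μ : ZMod n, q μ = G := by
    have hfib := hΦ.hasSum.tsum_fiberwise g
    exact (hasSum_fintype q).unique hfib
  -- the index bijection
  set e : Fin n → ZMod n := fun ξ => ((ξ : ℕ) : ZMod n) with hedef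
  have einj : Function.Injective e := by
    intro a b hab
    have := congrArg ZMod.val hab
    rw [ZMod.val_cast_of_lt a.isLt, ZMod.val_cast_of_lt b.isLt] at this
    exact Fin.ext this
  have ebij : Function.Bijective e := by
    rw [Fintype.bijective_iff_injective_and_card]
    exact ⟨einj, by rw [Fintype.card_fin, ZMod.card]⟩
  have hrowq : ∀ ξ : Fin n, ∑ ξ', q (e ξ - e ξ') = G := by
    intro ξ
    rw [Fintype.sum_bijective e ebij (fun ξ' => q (e ξ - e ξ')) (fun μ => q (e ξ - μ))
      (fun ξ' => rfl)]
    rw [Fintype.sum_equiv (Equiv.subLeft (e ξ)) (fun μ => q (e ξ - μ)) q (fun μ => rfl)]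
    exact hq_total
  have hcolq : ∀ ξ' : Fin n, ∑ ξ, q (e ξ - e ξ') = G := by
    intro ξ'
    rw [Fintype.sum_bijective e ebij (fun ξ => q (e ξ - e ξ')) (fun μ => q (μ - e ξ'))
      (fun ξ => rfl)]
    rw [Fintype.sum_equiv (Equiv.subRight (e ξ')) (fun μ => q (μ - e ξ')) q (fun μ => rfl)]
    exact hq_total
  set aC : Fin n → ℝ := fun ξ => 2 * Real.pi^2 * γ * normSq (hfam ξ) with haCdef
  have haC0 : ∀ ξ, 0 ≤ aC ξ := fun ξ => by
    have := Rank1Aux.normSq_nonneg (hfam ξ)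
    positivity
  set W := Wmat γ vhat n z with hWdef
  set D := Dmat γ n hfam with hDdef
  set M := D * (D * W - W * D) - (D * W - W * D) * D with hMdef
  -- entrywise formula
  have hentry : ∀ ξ ξ', M ξ ξ' = (((aC ξ - aC ξ')^2 : ℝ) : ℂ) * W ξ ξ' := by
    intro ξ ξ'
    simp only [hMdef, hDdef, Dmat, Matrix.sub_apply, Matrix.diagonal_mul, Matrix.mul_diagonal,
      haCdef]
    push_cast
    ring
  -- summability on fibers
  have hvsub : ∀ μ : ZMod n, Summable (fun h : {h : Fin d → ℤ // g h = μ} => ‖vhat h.1‖) := by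
    intro μ
    refine Summable.of_nonneg_of_le (fun h => norm_nonneg _) (fun h => ?_)
      ((hΦ.subtype _).congr fun h => rfl)
    have hN := Rank1Aux.normSq_nonneg h.1
    have : (1:ℝ) ≤ (1 + normSq h.1)^2 := by nlinarith
    calc ‖vhat h.1‖ = 1 * ‖vhat h.1‖ := (one_mul _).symm
      _ ≤ (1 + normSq h.1)^2 * ‖vhat h.1‖ :=
          mul_le_mul_of_nonneg_right this (norm_nonneg _)
  -- key pointwise bound inside each fiber
  have hkey : ∀ (ξ ξ' : Fin n) (h : Fin d → ℤ), g h = e ξ - e ξ' →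
      (aC ξ - aC ξ')^2 ≤ (2 * Real.pi^2 * γ)^2 * 16 * (1 + normSq h)^2
        * (1 + normSq (hfam ξ'))^2 := by
    intro ξ ξ' h hμ
    have h1 : normSq (hfam ξ) ≤ normSq (h + hfam ξ') := by
      apply hmin ξ
      rw [Rank1Aux.dotZ_add, Int.cast_add, hdot ξ']
      rw [hgdef] at hμ
      simp only at hμ
      rw [hμ, hedef]
      simp [sub_add_cancel]
    have h2 : normSq (hfam ξ') ≤ normSq (hfam ξ - h) := by
      apply hmin ξ'
      rw [Rank1Aux.dotZ_sub, Int.cast_sub, hdot ξ]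
      rw [hgdef] at hμ
      simp only at hμ
      rw [hμ, hedef]
      simp [sub_sub_cancel]
    rw [Rank1Aux.normSq_add] at h1
    rw [Rank1Aux.normSq_sub] at h2
    have hp : (∑ j, (h j : ℝ) * (hfam ξ' j : ℝ))^2 ≤ normSq h * normSq (hfam ξ') :=
      Finset.sum_mul_sq_le_sq_mul_sq Finset.univ _ _
    have hq' : (∑ j, (hfam ξ j : ℝ) * (h j : ℝ))^2 ≤ normSq (hfam ξ) * normSq h := by
      have := Finset.sum_mul_sq_le_sq_mul_sq Finset.univ
        (fun j => (hfam ξ j : ℝ)) (fun j => (h j : ℝ))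
      exact this
    have hkp := Rank1Aux.key_poly (p := ∑ j, (h j : ℝ) * (hfam ξ' j : ℝ))
      (q := ∑ j, (hfam ξ j : ℝ) * (h j : ℝ))
      (Rank1Aux.normSq_nonneg h) (Rank1Aux.normSq_nonneg (hfam ξ'))
      (Rank1Aux.normSq_nonneg (hfam ξ)) (by linarith) (by linarith)
      (by nlinarith [hp]) (by nlinarith [hq'])
    have : (aC ξ - aC ξ')^2 = (2 * Real.pi^2 * γ)^2 * (normSq (hfam ξ) - normSq (hfam ξ'))^2 := by
      rw [haCdef]; ring
    rw [this]
    calc (2 * Real.pi^2 * γ)^2 * (normSq (hfam ξ) - normSq (hfam ξ'))^2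
        ≤ (2 * Real.pi^2 * γ)^2 * (16 * (1 + normSq h)^2 * (1 + normSq (hfam ξ'))^2) :=
          mul_le_mul_of_nonneg_left hkp (by positivity)
      _ = _ := by ring
  -- entrywise bound
  have hMb : ∀ ξ ξ', ‖M ξ ξ'‖ ≤ (cW * q (e ξ - e ξ')) * ((aC ξ' + 1)^2) := by
    intro ξ ξ'
    rw [hentry ξ ξ', norm_mul, Complex.norm_real, Real.norm_of_nonneg (sq_nonneg _)]
    have hWnorm : ‖W ξ ξ'‖ ≤ (1/γ) * ∑' h : {h : Fin d → ℤ // g h = e ξ - e ξ'}, ‖vhat h.1‖ := by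
      rw [hWdef]
      show ‖(1 / (γ:ℂ)) * _‖ ≤ _
      rw [norm_mul]
      have h1 : ‖(1 / (γ:ℂ))‖ = 1/γ := by
        rw [norm_div, norm_one, Complex.norm_real, Real.norm_of_nonneg hγ.le]
      rw [h1]
      apply mul_le_mul_of_nonneg_left ?_ (by positivity)
      exact norm_tsum_le_tsum_norm (hvsub _)
    have hB := Rank1Aux.normSq_nonneg (hfam ξ')
    have hmono : (aC ξ - aC ξ')^2 * ‖W ξ ξ'‖
        ≤ (aC ξ - aC ξ')^2 * ((1/γ) * ∑' h : {h : Fin d → ℤ // g h = e ξ - e ξ'}, ‖vhat h.1‖) :=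
      mul_le_mul_of_nonneg_left hWnorm (sq_nonneg _)
    refine le_trans hmono ?_
    have hts : (aC ξ - aC ξ')^2 * ∑' h : {h : Fin d → ℤ // g h = e ξ - e ξ'}, ‖vhat h.1‖
        ≤ (2 * Real.pi^2 * γ)^2 * 16 * (1 + normSq (hfam ξ'))^2 * q (e ξ - e ξ') := by
      rw [← tsum_mul_left]
      rw [hqdef]
      simp only
      rw [← tsum_mul_left]
      refine Summable.tsum_le_tsum (fun h => ?_) ((hvsub _).mul_left _)
        (((hΦ.subtype _).congr (fun h => rfl)).mul_left _)
      have hk := hkey ξ ξ' h.1 h.2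
      calc (aC ξ - aC ξ')^2 * ‖vhat h.1‖
          ≤ ((2 * Real.pi^2 * γ)^2 * 16 * (1 + normSq h.1)^2 * (1 + normSq (hfam ξ'))^2)
              * ‖vhat h.1‖ := mul_le_mul_of_nonneg_right hk (norm_nonneg _)
        _ = (2 * Real.pi^2 * γ)^2 * 16 * (1 + normSq (hfam ξ'))^2 * φ h.1 := by
            rw [hφdef]; ring
    have hfinal : (1 + normSq (hfam ξ'))^2 ≤ ((aC ξ' + 1)^2) / m^2 := by
      have hm1 : m ≤ 1 := min_le_right _ _
      have hm2 : m ≤ 2 * Real.pi^2 * γ := min_le_left _ _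
      have hstep : m * (1 + normSq (hfam ξ')) ≤ aC ξ' + 1 := by
        simp only [haCdef]
        nlinarith [hB]
      rw [le_div_iff₀ (by positivity : (0:ℝ) < m^2)]
      calc (1 + normSq (hfam ξ'))^2 * m^2 = (m * (1 + normSq (hfam ξ')))^2 := by ring
        _ ≤ (aC ξ' + 1)^2 := by
            apply pow_le_pow_left₀ (mul_nonneg hm0.le (by nlinarith [hB])) hstep
    calc (aC ξ - aC ξ')^2 * ((1/γ) * ∑' h : {h : Fin d → ℤ // g h = e ξ - e ξ'}, ‖vhat h.1‖)
        = (1/γ) * ((aC ξ - aC ξ')^2 * ∑' h : {h : Fin d → ℤ // g h = e ξ - e ξ'}, ‖vhat h.1‖) := by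
          ring
      _ ≤ (1/γ) * ((2 * Real.pi^2 * γ)^2 * 16 * (1 + normSq (hfam ξ'))^2 * q (e ξ - e ξ')) :=
          mul_le_mul_of_nonneg_left hts (by positivity)
      _ ≤ (1/γ) * ((2 * Real.pi^2 * γ)^2 * 16 * (((aC ξ' + 1)^2) / m^2) * q (e ξ - e ξ')) := by
          apply mul_le_mul_of_nonneg_left ?_ (by positivity)
          apply mul_le_mul_of_nonneg_right ?_ (hq0 _)
          exact mul_le_mul_of_nonneg_left hfinal (by positivity)
      _ = (cW * q (e ξ - e ξ')) * ((aC ξ' + 1)^2) := by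
          rw [hcWdef]
          field_simp
  -- apply the Schur bound
  have hschur := Rank1Aux.schur_bound M (fun ξ ξ' => cW * q (e ξ - e ξ'))
    (fun ξ' => (aC ξ' + 1)^2) (cW * G) (by positivity)
    (fun ξ ξ' => mul_nonneg hcW0.le (hq0 _)) (fun ξ' => sq_nonneg _) hMb
    (fun ξ => by rw [← Finset.mul_sum, hrowq ξ]) (fun ξ' => by rw [← Finset.mul_sum, hcolq ξ'])
    y
  -- identify the right-hand side
  have hD1 : (D + 1)^2 = Matrix.diagonal ((fun ξ => ((2 * Real.pi ^ 2 * γ * normSq (hfam ξ) : ℝ) : ℂ) + 1) ^ 2) := by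
    rw [hDdef]
    unfold Dmat
    rw [← Matrix.diagonal_one, Matrix.diagonal_add, Matrix.diagonal_pow]
  have hrhs : (((D + 1)^2).mulVec y) = fun ξ => ((((aC ξ + 1)^2 : ℝ)) : ℂ) * y ξ := by
    funext ξ
    rw [hD1, Matrix.mulVec_diagonal]
    have : ((fun ξ => ((2 * Real.pi ^ 2 * γ * normSq (hfam ξ) : ℝ) : ℂ) + 1) ^ 2) ξ
        = (((2 * Real.pi ^ 2 * γ * normSq (hfam ξ) : ℝ) : ℂ) + 1) ^ 2 := rfl
    rw [this]
    congr 1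
    simp only [haCdef]
    push_cast
    ring
  have hVnn : 0 ≤ vecNorm (fun ξ => ((((aC ξ + 1)^2 : ℝ)) : ℂ) * y ξ) := by
    unfold vecNorm
    exact Real.sqrt_nonneg _
  rw [hrhs]
  refine le_trans hschur ?_
  exact mul_le_mul_of_nonneg_right (by linarith) hVnn


end
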